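/- arXiv:2301.11694 — 3 statements merged into one kernel-verified Lean document; each statement's English description precedes it below -/
import Mathlib

section
/- The connection Ḋ defined on a Riemannian Π-manifold by Ḋₓy = ∇ₓy − (1/2){(∇ₓφ)φy − (∇ₓη)(y)·ξ} − η(y)∇ₓξ is a natural connection, i.e., Ḋφ = Ḋξ = Ḋη = Ḋg = 0. -/
/-- Algebraic model of a Riemannian Π-manifold: `V` is the module of vector fields
over the commutative ring `C` of (smooth) functions, `g` the metric, `(phi, xi, eta)`
the Π-structure, `d` the directional-derivative action of vector fields on functions,
`nabla` the Levi-Civita connection (torsion-free w.r.t. the bracket `lie` and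
metric-compatible), together with the standard identities of the Π-structure. -/
structure RPM (C : Type*) (V : Type*) [CommRing C] [Algebra ℝ C]
    [AddCommGroup V] [Module C V] where
  g : V →ₗ[C] V →ₗ[C] C
  phi : V →ₗ[C] V
  xi : V
  eta : V →ₗ[C] C
  d : V → C → C
  nabla : V → V → V
  lie : V → V → V
  g_symm : ∀ x y, g x y = g y x
  phi_xi : phi xi = 0
  phi_sq : ∀ x, phi (phi x) = x - eta x • xi
  eta_phi : ∀ x, eta (phi x) = 0
  eta_xi : eta xi = 1
  g_phi_phi : ∀ x y, g (phi x) (phi y) = g x y - eta x * eta y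
  g_phi : ∀ x y, g (phi x) y = g x (phi y)
  g_xi : ∀ x, g x xi = eta x
  d_one : ∀ x, d x 1 = 0
  d_mul : ∀ x f h, d x (f * h) = f * d x h + h * d x f
  nabla_add_left : ∀ x y z, nabla (x + y) z = nabla x z + nabla y z
  nabla_smul_left : ∀ (f : C) (x y : V), nabla (f • x) y = f • nabla x y
  nabla_add_right : ∀ x y z, nabla x (y + z) = nabla x y + nabla x z
  nabla_leibniz : ∀ (x : V) (f : C) (y : V), nabla x (f • y) = d x f • y + f • nabla x y
  torsion_free : ∀ x y, nabla x y - nabla y x = lie x y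
  metric_compat : ∀ x y z, d x (g y z) = g (nabla x y) z + g y (nabla x z)

namespace RPM

variable {C : Type*} {V : Type*} [CommRing C] [Algebra ℝ C] [AddCommGroup V] [Module C V]

/-- The fundamental tensor `F(x,y,z) = g((∇ₓφ)y, z)`. -/
def F (M : RPM C V) (x y z : V) : C :=
  M.g (M.nabla x (M.phi y) - M.phi (M.nabla x y)) z

/-- The constant function 1/2. -/
noncomputable def half (M : RPM C V) : C := algebraMap ℝ C (1 / 2)

/-- The first natural connection
`Ḋₓy = ∇ₓy − (1/2){(∇ₓφ)(φy) − (∇ₓη)(y)·ξ} − η(y)∇ₓξ`, where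
`(∇ₓφ)(φy) = ∇ₓ(φ²y) − φ(∇ₓ(φy))` and `(∇ₓη)(y) = g(∇ₓξ, y)`. -/
noncomputable def D1 (M : RPM C V) (x y : V) : V :=
  M.nabla x y
    - M.half • ((M.nabla x (M.phi (M.phi y)) - M.phi (M.nabla x (M.phi y)))
        - M.g (M.nabla x M.xi) y • M.xi)
    - M.eta y • M.nabla x M.xi

/-- The torsion of the first natural connection. -/
noncomputable def T1 (M : RPM C V) (x y : V) : V := M.D1 x y - M.D1 y x - M.lie x y

/-- The Lee form ω = F(ξ,ξ,·). -/
def omegaF (M : RPM C V) (z : V) : C := M.F M.xi M.xi z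

end RPM

namespace RPM
variable {C : Type*} {V : Type*} [CommRing C] [Algebra ℝ C] [AddCommGroup V] [Module C V] (M : RPM C V)

lemma h2 : (2:C) * M.half = 1 := by
  rw [RPM.half, ← map_ofNat (algebraMap ℝ C) 2, ← map_mul]
  norm_num

lemma halfcancel {hf a : C} (h2 : (2:C) * hf = 1) (h : a + a = 0) : a = 0 := by
  linear_combination hf * h + (-a) * h2

lemma dzero (x : V) : M.d x 0 = 0 := by
  have h := M.d_mul x 0 0; simpa using h

lemma dneg1 (x : V) : M.d x (-1) = 0 := by
  have h := M.d_mul x (-1) (-1)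
  rw [neg_mul_neg, one_mul, M.d_one] at h
  apply halfcancel M.h2
  linear_combination h

lemma nzero (x : V) : M.nabla x 0 = 0 := by
  have h := M.nabla_leibniz x 0 0; simpa using h

lemma nsub (x y z : V) : M.nabla x (y - z) = M.nabla x y - M.nabla x z := by
  rw [sub_eq_add_neg, ← neg_one_smul C z, M.nabla_add_right, M.nabla_leibniz, M.dneg1,
    zero_smul, zero_add, neg_one_smul, ← sub_eq_add_neg]

lemma gxixi (x : V) : M.g (M.nabla x M.xi) M.xi = 0 := by
  have h := M.metric_compat x M.xi M.xi
  rw [M.g_xi, M.eta_xi, M.d_one, M.g_symm M.xi] at h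
  exact halfcancel M.h2 h.symm

lemma etanxi (x : V) : M.eta (M.nabla x M.xi) = 0 := by
  rw [← M.g_xi, M.gxixi]

lemma deta (x y : V) : M.d x (M.eta y) = M.eta (M.nabla x y) + M.g (M.nabla x M.xi) y := by
  have h := M.metric_compat x y M.xi
  rw [M.g_xi] at h
  rw [h, M.g_xi, M.g_symm y]

lemma nphi2 (x y : V) : M.nabla x (M.phi (M.phi y))
    = M.nabla x y - M.d x (M.eta y) • M.xi - M.eta y • M.nabla x M.xi := by
  rw [M.phi_sq, M.nsub, M.nabla_leibniz]
  abel

lemma gxi' (w : V) : M.g M.xi w = M.eta w := by rw [M.g_symm, M.g_xi]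

lemma etanphi (x y : V) : M.eta (M.nabla x (M.phi y)) = - M.g (M.nabla x M.xi) (M.phi y) := by
  have h := M.deta x (M.phi y)
  rw [M.eta_phi, M.dzero] at h
  linear_combination -h


lemma part2 (x : V) : M.D1 x M.xi = 0 := by
  simp [D1, M.phi_xi, M.nzero, M.gxixi, M.eta_xi]

lemma part3 (x y : V) : M.d x (M.eta y) = M.eta (M.D1 x y) := by
  rw [D1, M.nphi2]
  simp only [map_sub, map_smul, smul_eq_mul, M.eta_phi, M.eta_xi, M.etanxi,
    mul_one, mul_zero, sub_zero]
  rw [M.deta]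
  linear_combination (-(M.g (M.nabla x M.xi) y)) * M.h2

lemma part1 (x y : V) : M.D1 x (M.phi y) = M.phi (M.D1 x y) := by
  simp only [D1, map_sub, map_smul]
  rw [M.phi_sq (M.phi y), M.eta_phi, zero_smul, sub_zero, M.nphi2]
  simp only [map_sub, map_smul, M.phi_xi, smul_zero, M.eta_phi, zero_smul, sub_zero,
    M.phi_sq (M.nabla x (M.phi y)), M.etanphi]
  linear_combination (norm := module) M.h2 • (M.phi (M.nabla x y) - M.nabla x (M.phi y)
    - M.eta y • M.phi (M.nabla x M.xi))

lemma part4 (x y z : V) : M.d x (M.g y z) = M.g (M.D1 x y) z + M.g y (M.D1 x z) := by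
  have h1 := M.metric_compat x (M.phi y) (M.phi z)
  have h2 := M.metric_compat x (M.phi (M.phi y)) z
  rw [M.g_phi (M.phi y) z, M.nphi2, M.phi_sq y] at h2
  simp only [map_sub, map_smul, LinearMap.sub_apply, LinearMap.smul_apply, smul_eq_mul,
    M.gxi'] at h2
  have hP : M.g (M.phi (M.nabla x (M.phi y))) z = M.g (M.nabla x (M.phi y)) (M.phi z) :=
    M.g_phi _ z
  have hQ : M.g y (M.phi (M.nabla x (M.phi z))) = M.g (M.phi y) (M.nabla x (M.phi z)) :=
    (M.g_phi y _).symm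
  have dzq := M.deta x z
  rw [M.metric_compat]
  simp only [D1, M.nphi2, map_sub, map_smul, LinearMap.sub_apply, LinearMap.smul_apply,
    smul_eq_mul, M.gxi', M.g_xi]
  rw [M.g_symm y (M.nabla x M.xi)]
  linear_combination (-M.half) * hP + (-M.half) * hQ + M.half * h1 + (-M.half) * h2
    + (-(M.half * M.eta y)) * dzq
    + (-(M.eta y * M.g (M.nabla x M.xi) z + M.g (M.nabla x M.xi) y * M.eta z)) * M.h2


end RPM

open RPM

variable {C : Type*} {V : Type*} [CommRing C] [Algebra ℝ C] [AddCommGroup V] [Module C V]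

/-- The connection `Ḋₓy = ∇ₓy − (1/2){(∇ₓφ)(φy) − (∇ₓη)(y)ξ} − η(y)∇ₓξ`
is a natural connection: `Ḋφ = Ḋξ = Ḋη = Ḋg = 0`. -/
theorem stmt11 (M : RPM C V) :
    (∀ x y, M.D1 x (M.phi y) = M.phi (M.D1 x y)) ∧
    (∀ x, M.D1 x M.xi = 0) ∧
    (∀ x y, M.d x (M.eta y) = M.eta (M.D1 x y)) ∧
    (∀ x y z, M.d x (M.g y z) = M.g (M.D1 x y) z + M.g y (M.D1 x z)) := by
  exact ⟨M.part1, M.part2, M.part3, M.part4⟩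
end

section
/- On a Riemannian Π-manifold, the (0,3)-potential Q̇(x,y,z) = g(Ḋₓy − ∇ₓy, z) of the first natural connection satisfies Q̇(x,y,z) = −(1/2){F(x,φy,z) + η(z)F(x,φy,ξ)} + η(y)F(x,φz,ξ). -/
open RPM

variable {C : Type*} {V : Type*} [CommRing C] [Algebra ℝ C] [AddCommGroup V] [Module C V]

lemma d_zero' (M : RPM C V) (x : V) : M.d x 0 = 0 := by
  have := M.d_mul x 0 0
  simpa using this

lemma half_two (M : RPM C V) : M.half * 2 = 1 := by
  have : M.half * 2 = algebraMap ℝ C (1/2) * algebraMap ℝ C 2 := by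
    simp [RPM.half, map_ofNat]
  rw [this, ← map_mul]
  norm_num

lemma g_nabla_xi_xi (M : RPM C V) (x : V) : M.g (M.nabla x M.xi) M.xi = 0 := by
  have h := M.metric_compat x M.xi M.xi
  rw [M.g_xi, M.eta_xi, M.d_one, M.g_symm M.xi] at h
  calc M.g (M.nabla x M.xi) M.xi
      = (M.half * 2) * M.g (M.nabla x M.xi) M.xi := by rw [half_two, one_mul]
    _ = M.half * (M.g (M.nabla x M.xi) M.xi + M.g (M.nabla x M.xi) M.xi) := by ring
    _ = 0 := by rw [← h, mul_zero]

lemma key (M : RPM C V) (x y : V) :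
    M.F x (M.phi y) M.xi = - M.g (M.nabla x M.xi) y := by
  have hphi2 : M.g (M.phi (M.phi y)) M.xi = 0 := by
    rw [M.g_xi, M.phi_sq, map_sub, map_smul, M.eta_xi, smul_eq_mul, mul_one, sub_self]
  have h := M.metric_compat x (M.phi (M.phi y)) M.xi
  rw [hphi2, d_zero'] at h
  have h2 : M.g (M.nabla x (M.phi (M.phi y))) M.xi = - M.g (M.phi (M.phi y)) (M.nabla x M.xi) := by
    linear_combination -h
  unfold RPM.F
  rw [map_sub, LinearMap.sub_apply]
  have h3 : M.g (M.phi (M.nabla x (M.phi y))) M.xi = 0 := by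
    rw [M.g_xi, M.eta_phi]
  rw [h3, h2, M.phi_sq, map_sub, LinearMap.sub_apply, LinearMap.map_smul,
    LinearMap.smul_apply, M.g_symm M.xi, g_nabla_xi_xi, smul_eq_mul, mul_zero,
    sub_zero, sub_zero, M.g_symm y]

/-- The (0,3)-potential of the first natural connection satisfies
`Q̇(x,y,z) = −(1/2){F(x,φy,z) + η(z)F(x,φy,ξ)} + η(y)F(x,φz,ξ)`. -/
theorem stmt12 (M : RPM C V) :
    ∀ x y z : V,
      M.g (M.D1 x y - M.nabla x y) z
        = - M.half * (M.F x (M.phi y) z + M.eta z * M.F x (M.phi y) M.xi)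
          + M.eta y * M.F x (M.phi z) M.xi := by
  intro x y z
  have hy := key M x y
  have hz := key M x z
  have hFdef : M.F x (M.phi y) z
      = M.g (M.nabla x (M.phi (M.phi y)) - M.phi (M.nabla x (M.phi y))) z := rfl
  unfold RPM.D1
  rw [hy, hz, hFdef]
  simp only [map_sub, map_add, LinearMap.map_smul, LinearMap.sub_apply,
    LinearMap.add_apply, LinearMap.smul_apply, smul_eq_mul]
  rw [M.g_symm M.xi z, M.g_xi]
  ring
end

section
/- On a (2n+1)-dimensional Riemannian Π-manifold of class F₄ (i.e., with F(x,y,z) = (θ(ξ)/(2n)){g(φx,φy)η(z) + g(φx,φz)η(y)}), the first natural connection is given by Ḋₓy = ∇ₓy − (θ(ξ)/(2n)){g(x,φy)ξ − η(y)φx}. -/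
open RPM

variable {C : Type*} {V : Type*} [CommRing C] [Algebra ℝ C] [AddCommGroup V] [Module C V]

/-- On a `(2n+1)`-dimensional Riemannian Π-manifold of class F₄, i.e. with
`F(x,y,z) = (θ(ξ)/(2n)){g(φx,φy)η(z) + g(φx,φz)η(y)}`, the first natural connection
is `Ḋₓy = ∇ₓy − (θ(ξ)/(2n)){g(x,φy)ξ − η(y)φx}`. -/
theorem stmt14 (M : RPM C V) (n : ℕ) (hn : 0 < n)
    (b : Fin (2 * n + 1) → V) (hb0 : b 0 = M.xi)
    (hbeta : ∀ i : Fin (2 * n + 1), i ≠ 0 → M.eta (b i) = 0)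
    (hspan : ∀ v : V, v ∈ Submodule.span C (Set.range b))
    (ginv : Matrix (Fin (2 * n + 1)) (Fin (2 * n + 1)) C)
    (hginv : ∀ i k, (∑ j, ginv i j * M.g (b j) (b k)) = if i = k then 1 else 0)
    (thetaxi : C)
    (hthetaxi : thetaxi = ∑ i, ∑ j, ginv i j * M.F (b i) (b j) M.xi)
    (hF4 : ∀ x y z, M.F x y z
      = algebraMap ℝ C (1 / (2 * (n : ℝ))) * thetaxi
          * (M.g (M.phi x) (M.phi y) * M.eta z + M.g (M.phi x) (M.phi z) * M.eta y)) :
    ∀ x y, M.D1 x y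
      = M.nabla x y
        - (algebraMap ℝ C (1 / (2 * (n : ℝ))) * thetaxi)
            • (M.g x (M.phi y) • M.xi - M.eta y • M.phi x) := by
  intro x y
  set k : C := algebraMap ℝ C (1 / (2 * (n : ℝ))) * thetaxi with hk
  -- nondegeneracy of g
  have nondeg : ∀ v : V, (∀ z, M.g v z = 0) → v = 0 := by
    intro v hv
    obtain ⟨c, hc⟩ := (Submodule.mem_span_range_iff_exists_fun C).mp (hspan v)
    set A : Matrix (Fin (2 * n + 1)) (Fin (2 * n + 1)) C :=
      fun j l => M.g (b j) (b l) with hA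
    have h1 : ginv * A = 1 := by
      ext i l
      rw [Matrix.mul_apply]
      simpa [Matrix.mul_apply, hA, Matrix.one_apply] using hginv i l
    have h2 : A * ginv = 1 := mul_eq_one_comm.mp h1
    have hrow : ∀ j, (∑ l, c l * A l j) = 0 := by
      intro j
      have hv' := hv (b j)
      rw [← hc] at hv'
      simpa [map_sum, LinearMap.sum_apply, map_smul, LinearMap.smul_apply,
        smul_eq_mul, hA] using hv'
    have hck : ∀ i, c i = 0 := by
      intro i
      have e1 : ∑ j, (∑ l, c l * A l j) * ginv j i = ∑ l, c l * (A * ginv) l i := by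
        simp only [Matrix.mul_apply, Finset.sum_mul, Finset.mul_sum, mul_assoc]
        rw [Finset.sum_comm]
      have e2 : ∑ j, (∑ l, c l * A l j) * ginv j i = 0 := by
        simp [hrow]
      rw [e1, h2] at e2
      simpa [Matrix.one_apply] using e2
    rw [← hc]
    simp [hck]
  have hhalf2 : (algebraMap ℝ C (1 / 2)) * 2 = 1 := by
    rw [show (2 : C) = algebraMap ℝ C 2 from (map_ofNat _ 2).symm, ← map_mul]
    norm_num
  have hnabla0 : ∀ w : V, M.nabla w (0 : V) = 0 := by
    intro w
    have h := M.nabla_add_right w 0 0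
    rw [add_zero] at h
    exact (add_left_cancel (a := M.nabla w 0) (by rw [add_zero]; exact h)).symm
  have hgphixi : ∀ w : V, M.g (M.phi w) M.xi = 0 := by
    intro w; rw [M.g_xi, M.eta_phi]
  -- g(∇ₓξ, ξ) = 0
  have hxixi : M.g (M.nabla x M.xi) M.xi = 0 := by
    set t : C := M.g (M.nabla x M.xi) M.xi with ht
    have hmc := M.metric_compat x M.xi M.xi
    rw [M.g_xi, M.eta_xi, M.d_one, M.g_symm M.xi (M.nabla x M.xi), ← ht] at hmc
    have htt : t + t = 0 := hmc.symm
    calc t = (algebraMap ℝ C (1 / 2) * 2) * t := by rw [hhalf2, one_mul]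
      _ = algebraMap ℝ C (1 / 2) * (t + t) := by ring
      _ = 0 := by rw [htt, mul_zero]
  -- φ(∇ₓξ) relation from F₄
  have hFxi : ∀ z : V, M.g (M.phi (M.nabla x M.xi)) z = -(k * M.g (M.phi x) (M.phi z)) := by
    intro z
    have h := hF4 x M.xi z
    rw [RPM.F, M.phi_xi, hnabla0, zero_sub, map_neg, LinearMap.neg_apply,
      M.eta_xi] at h
    simp only [map_zero] at h
    linear_combination -h
  -- ∇ₓξ = -(k • φx)
  have hnxi : M.nabla x M.xi = -(k • M.phi x) := by
    have hg : ∀ z : V, M.g (M.nabla x M.xi) z = -(k * M.g (M.phi x) z) := by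
      intro z
      have hdec : M.nabla x M.xi = M.phi (M.phi (M.nabla x M.xi)) := by
        rw [M.phi_sq, ← M.g_xi, hxixi, zero_smul, sub_zero]
      calc M.g (M.nabla x M.xi) z
          = M.g (M.phi (M.phi (M.nabla x M.xi))) z := by rw [← hdec]
        _ = M.g (M.phi (M.nabla x M.xi)) (M.phi z) := by rw [M.g_phi]
        _ = -(k * M.g (M.phi x) (M.phi (M.phi z))) := hFxi (M.phi z)
        _ = -(k * M.g (M.phi x) z) := by
            rw [M.phi_sq, map_sub, map_smul, smul_eq_mul, hgphixi, mul_zero, sub_zero]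
    have := nondeg (M.nabla x M.xi + k • M.phi x) (by
      intro z
      rw [map_add, LinearMap.add_apply, map_smul, LinearMap.smul_apply, smul_eq_mul, hg z]
      ring)
    linear_combination (norm := module) this
  -- (∇ₓφ)(φy) = (k * g(x, φy)) • ξ
  have hB : M.nabla x (M.phi (M.phi y)) - M.phi (M.nabla x (M.phi y))
      = (k * M.g x (M.phi y)) • M.xi := by
    have hg : ∀ z : V,
        M.g (M.nabla x (M.phi (M.phi y)) - M.phi (M.nabla x (M.phi y))) z
          = (k * M.g x (M.phi y)) * M.eta z := by
      intro z
      have h := hF4 x (M.phi y) z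
      rw [RPM.F, M.eta_phi, mul_zero, add_zero] at h
      rw [h, M.g_phi_phi, M.eta_phi, mul_zero, sub_zero]
      ring
    have := nondeg
      ((M.nabla x (M.phi (M.phi y)) - M.phi (M.nabla x (M.phi y)))
        - (k * M.g x (M.phi y)) • M.xi) (by
      intro z
      rw [map_sub, LinearMap.sub_apply, map_smul, LinearMap.smul_apply, smul_eq_mul,
        hg z, M.g_symm M.xi z, M.g_xi]
      ring)
    linear_combination (norm := module) this
  -- g(∇ₓξ, y)
  have hgnxiy : M.g (M.nabla x M.xi) y = -(k * M.g x (M.phi y)) := by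
    rw [hnxi, map_neg, LinearMap.neg_apply, map_smul, LinearMap.smul_apply,
      smul_eq_mul, M.g_phi]
  -- put it together
  rw [RPM.D1, hB, hgnxiy, hnxi]
  simp only [RPM.half]
  have hs : algebraMap ℝ C (1 / 2) • ((k * M.g x (M.phi y)) • M.xi
        - -(k * M.g x (M.phi y)) • M.xi)
      = (k * M.g x (M.phi y)) • M.xi := by
    rw [sub_eq_add_neg, neg_smul, neg_neg, ← add_smul, smul_smul]
    congr 1
    calc algebraMap ℝ C (1 / 2) * (k * M.g x (M.phi y) + k * M.g x (M.phi y))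
        = (algebraMap ℝ C (1 / 2) * 2) * (k * M.g x (M.phi y)) := by ring
      _ = k * M.g x (M.phi y) := by rw [hhalf2, one_mul]
  rw [hs]
  module
end
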